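/- The sum over all subsets S of {1,...,n} of det(X_Sᵀ X_S + A) · ∏_{i∈S} p_i · ∏_{i∉S} (1−p_i) equals det(∑_i p_i x_i x_iᵀ + A); hence the regularized DPP probabilities sum to one. -/

import Mathlib

open Matrix BigOperators
open Finset

variable {d : ℕ}

lemma det_add_smul_vecMulVec (M : Matrix (Fin d) (Fin d) ℝ) (v : Fin d → ℝ) (t : ℝ) :
    (M + t • vecMulVec v v).det
      = M.det + t * ∑ j, v j * (M.updateRow j v).det := by
  classical
  set f : (Fin d → ℝ) [⋀^Fin d]→ₗ[ℝ] ℝ := Matrix.detRowAlternating with hf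
  set m : Fin d → (Fin d → ℝ) := fun i => M i with hm
  set m' : Fin d → (Fin d → ℝ) := fun i => (t * v i) • v with hm'
  have hrows : ((M + t • vecMulVec v v) : Fin d → Fin d → ℝ) = m + m' := by
    funext i j
    simp [hm, hm', vecMulVec_apply, Matrix.add_apply, Matrix.smul_apply, mul_assoc]
  -- terms with at least two coordinates replaced vanish
  have hzero : ∀ s : Finset (Fin d), 2 ≤ s.card → f (s.piecewise m' m) = 0 := by
    intro s hs
    obtain ⟨i, hi, j, hj, hij⟩ := Finset.one_lt_card.mp hs
    set g := s.piecewise m' m with hg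
    have hgi : g i = (t * v i) • v := by simp [hg, Finset.piecewise_eq_of_mem _ _ _ hi, hm']
    have hgj : g j = (t * v j) • v := by simp [hg, Finset.piecewise_eq_of_mem _ _ _ hj, hm']
    have h1 : f g = (t * v i) • f (Function.update g i v) := by
      conv_lhs => rw [← Function.update_eq_self i g, hgi]
      rw [f.map_update_smul]
    have h2 : f (Function.update g i v) = (t * v j) • f (Function.update (Function.update g i v) j v) := by
      conv_lhs => rw [← Function.update_eq_self j (Function.update g i v),
        Function.update_apply, if_neg hij.symm, hgj]
      rw [f.map_update_smul]
    have h3 : f (Function.update (Function.update g i v) j v) = 0 := by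
      apply f.map_eq_zero_of_eq _ _ hij
      · rw [Function.update_apply, if_neg hij, Function.update_self, Function.update_self]
    rw [h1, h2, h3, smul_zero, smul_zero]
  have key : f (m + m') = f m + t * ∑ j, v j * f (Function.update m j (v)) := by
    rw [show f (m + m') = f.toMultilinearMap (m' + m) by rw [add_comm]; rfl,
      MultilinearMap.map_add_univ]
    have hsub : (Finset.univ.filter (fun s : Finset (Fin d) => s.card ≤ 1))
        = insert (∅ : Finset (Fin d)) (Finset.univ.image fun j => ({j} : Finset (Fin d))) := by
      ext s
      simp only [mem_filter, mem_univ, true_and, mem_insert, mem_image]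
      constructor
      · intro h
        interval_cases h' : s.card
        · exact Or.inl (Finset.card_eq_zero.mp h')
        · obtain ⟨a, rfl⟩ := Finset.card_eq_one.mp h'
          exact Or.inr ⟨a, rfl⟩
      · rintro (rfl | ⟨a, rfl⟩) <;> simp
    rw [← Finset.sum_filter_of_ne (p := fun s : Finset (Fin d) => s.card ≤ 1)
      (fun s _ hne => by by_contra h; exact hne (hzero s (by omega)))]
    rw [hsub, Finset.sum_insert (by simp),
      Finset.sum_image (fun a _ b _ h => Finset.singleton_injective h)]
    have h0 : f ((∅ : Finset (Fin d)).piecewise m' m) = f m := by simp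
    have h1 : ∀ j : Fin d, f (({j} : Finset (Fin d)).piecewise m' m)
        = t * (v j * f (Function.update m j v)) := by
      intro j
      rw [Finset.piecewise_singleton,
        show m' j = (t * v j) • v from rfl, f.map_update_smul]
      simp [smul_eq_mul]; ring
    show f ((∅ : Finset (Fin d)).piecewise m' m)
        + (∑ x : Fin d, f (({x} : Finset (Fin d)).piecewise m' m))
      = f m + t * ∑ j, v j * f (Function.update m j v)
    rw [h0]
    simp_rw [h1]
    rw [← Finset.mul_sum]
  have hdet1 : (M + t • vecMulVec v v).det = f (m + m') := by
    show f _ = _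
    rw [show ((M + t • vecMulVec v v) : Fin d → Fin d → ℝ) = m + m' from hrows]
  rw [hdet1, key]
  rfl

lemma det_affine_rank_one (M : Matrix (Fin d) (Fin d) ℝ) (v : Fin d → ℝ) (t : ℝ) :
    (M + t • vecMulVec v v).det = (1 - t) * M.det + t * (M + vecMulVec v v).det := by
  have h2 := det_add_smul_vecMulVec M v 1
  rw [one_smul] at h2
  rw [det_add_smul_vecMulVec M v t, h2]; ring

lemma dpp_aux (d : ℕ) {n : ℕ} (x : Fin n → Fin d → ℝ) (p : Fin n → ℝ)
    (T : Finset (Fin n)) :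
    ∀ A : Matrix (Fin d) (Fin d) ℝ,
    ∑ S ∈ T.powerset,
        ((∑ i ∈ S, vecMulVec (x i) (x i)) + A).det *
          ((∏ i ∈ S, p i) * ∏ i ∈ T \ S, (1 - p i))
      = ((∑ i ∈ T, p i • vecMulVec (x i) (x i)) + A).det := by
  classical
  induction T using Finset.induction_on with
  | empty => intro A; simp
  | @insert a T ha ih =>
    intro A
    have hdisj : Disjoint T.powerset (T.powerset.image (insert a)) := by
      rw [Finset.disjoint_left]
      rintro S hS hS'
      obtain ⟨S', hS', rfl⟩ := Finset.mem_image.mp hS'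
      exact ha (Finset.mem_powerset.mp hS (Finset.mem_insert_self a S'))
    have hinj : ∀ S ∈ T.powerset, ∀ S' ∈ T.powerset,
        insert a S = insert a S' → S = S' := by
      intro S hS S' hS' h
      have haS : a ∉ S := fun h' => ha (Finset.mem_powerset.mp hS h')
      have haS' : a ∉ S' := fun h' => ha (Finset.mem_powerset.mp hS' h')
      rw [← Finset.erase_insert haS, h, Finset.erase_insert haS']
    rw [Finset.powerset_insert, Finset.sum_union hdisj, Finset.sum_image hinj]
    have e1 : ∑ S ∈ T.powerset,
        ((∑ i ∈ S, vecMulVec (x i) (x i)) + A).det *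
          ((∏ i ∈ S, p i) * ∏ i ∈ insert a T \ S, (1 - p i))
        = (1 - p a) * ((∑ i ∈ T, p i • vecMulVec (x i) (x i)) + A).det := by
      rw [← ih A, Finset.mul_sum]
      refine Finset.sum_congr rfl fun S hS => ?_
      have haS : a ∉ T \ S := fun h' => ha (Finset.mem_sdiff.mp h').1
      rw [Finset.insert_sdiff_of_notMem _
        (fun h' => ha (Finset.mem_powerset.mp hS h')), Finset.prod_insert haS]
      ring
    have e2 : ∑ S ∈ T.powerset,
        ((∑ i ∈ insert a S, vecMulVec (x i) (x i)) + A).det *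
          ((∏ i ∈ insert a S, p i) * ∏ i ∈ insert a T \ insert a S, (1 - p i))
        = p a * ((∑ i ∈ T, p i • vecMulVec (x i) (x i))
            + (vecMulVec (x a) (x a) + A)).det := by
      rw [← ih (vecMulVec (x a) (x a) + A), Finset.mul_sum]
      refine Finset.sum_congr rfl fun S hS => ?_
      have haS : a ∉ S := fun h' => ha (Finset.mem_powerset.mp hS h')
      have hsd : insert a T \ insert a S = T \ S := by
        ext i
        simp only [Finset.mem_sdiff, Finset.mem_insert, not_or]
        constructor
        · rintro ⟨h1 | h1, h2, h3⟩
          · exact absurd h1 h2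
          · exact ⟨h1, h3⟩
        · rintro ⟨h1, h2⟩
          exact ⟨Or.inr h1, fun h => ha (h ▸ h1), h2⟩
      rw [hsd, Finset.sum_insert haS, Finset.prod_insert haS,
        show vecMulVec (x a) (x a) + ∑ i ∈ S, vecMulVec (x i) (x i) + A
          = (∑ i ∈ S, vecMulVec (x i) (x i)) + (vecMulVec (x a) (x a) + A) by abel]
      ring
    rw [e1, e2, Finset.sum_insert ha,
      show p a • vecMulVec (x a) (x a) + ∑ i ∈ T, p i • vecMulVec (x i) (x i) + A
        = ((∑ i ∈ T, p i • vecMulVec (x i) (x i)) + A)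
            + p a • vecMulVec (x a) (x a) by abel,
      det_affine_rank_one,
      show (∑ i ∈ T, p i • vecMulVec (x i) (x i)) + A + vecMulVec (x a) (x a)
        = (∑ i ∈ T, p i • vecMulVec (x i) (x i))
            + (vecMulVec (x a) (x a) + A) by abel]

/-- The regularized DPP probabilities sum to one: the sum over all subsets `S`
of `det (X_Sᵀ X_S + A) ∏_{i∈S} p i ∏_{i∉S} (1 - p i)` equals
`det (∑ i, p i • x i x iᵀ + A)`, where `X_Sᵀ X_S = ∑_{i∈S} x i x iᵀ`. -/
theorem regularized_dpp_normalization
    (n d : ℕ) (x : Fin n → (Fin d → ℝ)) (p : Fin n → ℝ)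
    (hp : ∀ i, p i ∈ Set.Icc (0 : ℝ) 1)
    (A : Matrix (Fin d) (Fin d) ℝ) (hA : A.PosSemidef) :
    ∑ S : Finset (Fin n),
        ((∑ i ∈ S, vecMulVec (x i) (x i)) + A).det *
          ((∏ i ∈ S, p i) * ∏ i ∈ Sᶜ, (1 - p i))
      = (∑ i, p i • vecMulVec (x i) (x i) + A).det := by
  have := dpp_aux d x p Finset.univ A
  rw [Finset.powerset_univ] at this
  rw [← this]
  exact Finset.sum_congr rfl fun S _ => by rw [Finset.compl_eq_univ_sdiff]
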